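/- Let N be the subalgebra of (T(k^T), ⧢̃) generated by the degree-1 elements, graded by N = ⊕_{(w,j)} N_{(w,j)} where N_{(w,j)} is spanned by products t₁ ⧢̃ ⋯ ⧢̃ t_j with t₁⋯t_j = w. If N_{(w,j)} ≠ 0 then ℓ_T(w) ≤ j and ℓ_T(w) ≡ j (mod 2). -/

import Mathlib

variable (k : Type*) [Field k] {B W : Type*} [Group W]

/-- The reflection length of `w`: the minimal number of reflections whose product is `w`. -/
noncomputable def reflLen (M : CoxeterMatrix B) (cs : CoxeterSystem M W) (w : W) : ℕ :=
  sInf {n | ∃ l : List W, (∀ t ∈ l, cs.IsReflection t) ∧ l.length = n ∧ l.prod = w}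

/-- The twisted shuffle product `⧢̃` on basis elements, where `t^u = u t u`. -/
noncomputable def tsh : List W → List W → (List W →₀ k)
  | [], l₂ => Finsupp.single l₂ 1
  | l₁, [] => Finsupp.single l₁ 1
  | t :: ts, u :: us =>
      Finsupp.mapDomain (t :: ·) (tsh ts (u :: us)) +
        ((-1 : k) ^ (ts.length + 1)) •
          Finsupp.mapDomain (u :: ·) (tsh ((t :: ts).map (fun x => u * x * u)) us)
  termination_by l₁ l₂ => l₁.length + l₂.length
  decreasing_by
    all_goals simp

/-- The iterated twisted shuffle product `t₁ ⧢̃ t₂ ⧢̃ ⋯ ⧢̃ t_j` of degree-one elements. -/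
noncomputable def tshList : List W → (List W →₀ k)
  | [] => Finsupp.single [] 1
  | t :: rest =>
      ((Finsupp.lift (List W →₀ k) k (List W)) (tsh k [t])) (tshList rest)

/-- The homogeneous component `N_{(w,j)}` of the Nichols algebra: the span of the
products `t₁ ⧢̃ ⋯ ⧢̃ t_j` over lists of reflections with `t₁ ⋯ t_j = w`. -/
noncomputable def nicholsComponent (M : CoxeterMatrix B) (cs : CoxeterSystem M W)
    (w : W) (j : ℕ) : Submodule k (List W →₀ k) :=
  Submodule.span k {x | ∃ l : List W, (∀ t ∈ l, cs.IsReflection t) ∧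
    l.length = j ∧ l.prod = w ∧ x = tshList k l}


lemma lengthParity_list_prod {B W : Type*} [Group W] {M : CoxeterMatrix B}
    {cs : CoxeterSystem M W} (l : List W) (hl : ∀ t ∈ l, cs.IsReflection t) :
    cs.lengthParity l.prod = Multiplicative.ofAdd (l.length : ZMod 2) := by
  induction l with
  | nil => simp
  | cons a l ih =>
    have ha : cs.lengthParity a = Multiplicative.ofAdd 1 := by
      obtain ⟨v, i, rfl⟩ := hl a List.mem_cons_self
      simp [CoxeterSystem.lengthParity_simple]
    rw [List.prod_cons, map_mul, ha, ih (fun t ht => hl t (List.mem_cons_of_mem a ht))]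
    rw [← ofAdd_add]
    congr 1
    simp [add_comm]

/-- If the homogeneous component `N_{(w,j)}` of the Nichols algebra of
a finite Coxeter group is nonzero, then `ℓ_T(w) ≤ j` and `ℓ_T(w) ≡ j (mod 2)`. -/
theorem nicholsComponent_ne_bot (M : CoxeterMatrix B) (cs : CoxeterSystem M W) [Finite W]
    (w : W) (j : ℕ) (h : nicholsComponent k M cs w j ≠ ⊥) :
    reflLen M cs w ≤ j ∧ reflLen M cs w % 2 = j % 2 := by
  have hl : ∃ l : List W, (∀ t ∈ l, cs.IsReflection t) ∧ l.length = j ∧ l.prod = w := by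
    by_contra hc
    push_neg at hc
    apply h
    unfold nicholsComponent
    convert Submodule.span_empty
    ext x
    simp only [Set.mem_setOf_eq, Set.mem_empty_iff_false, iff_false]
    rintro ⟨l, h1, h2, h3, -⟩
    exact (hc l h1 h2) h3
  obtain ⟨l, hlr, hlen, hprod⟩ := hl
  have hmem : j ∈ {n | ∃ l : List W, (∀ t ∈ l, cs.IsReflection t) ∧ l.length = n ∧ l.prod = w} :=
    ⟨l, hlr, hlen, hprod⟩
  have hle : reflLen M cs w ≤ j := Nat.sInf_le hmem
  refine ⟨hle, ?_⟩
  have hne : {n | ∃ l : List W, (∀ t ∈ l, cs.IsReflection t) ∧ l.length = n ∧ l.prod = w}.Nonempty :=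
    ⟨j, hmem⟩
  obtain ⟨l', hlr', hlen', hprod'⟩ := Nat.sInf_mem hne
  have h1 := lengthParity_list_prod l' hlr'
  have h2 := lengthParity_list_prod l hlr
  rw [hprod'] at h1
  rw [hprod] at h2
  rw [h2] at h1
  have : ((l'.length : ZMod 2)) = (l.length : ZMod 2) := by
    exact_mod_cast (Multiplicative.ofAdd.injective h1).symm
  have := (ZMod.natCast_eq_natCast_iff _ _ _).mp this
  rw [hlen', hlen] at this
  exact this
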